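/- arXiv:2006.14387 — 4 statements merged into one kernel-verified Lean document; each statement's English description precedes it below -/
import Mathlib

section
/- Let a, b, c, d > 0 and let 2 < p < p̄ < q ≤ 2*, 2 < r < 2*, with exponents γ_s = N(s-2)/(2s) for s ∈ {p,q,r} (and γ_{2*}=1), where p̄ = 2+4/N and N ≥ 3. Then the function l(t) = a t² − b t^{rγ_r} − c t^{pγ_p} − d t^{qγ_q} has at most two critical points on (0, ∞). -/
set_option maxHeartbeats 1000000

open Real Set

lemma aux_convexOn (C l : ℝ) (hC : 0 ≤ C) :
    ConvexOn ℝ Set.univ (fun x => C * Real.exp (l * x)) := by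
  constructor
  · exact convex_univ
  · intro x _ y _ th mu hth hmu hthmu
    have h := convexOn_exp.2 (Set.mem_univ (l * x)) (Set.mem_univ (l * y)) hth hmu hthmu
    simp only [smul_eq_mul] at *
    have hx : l * (th * x + mu * y) = th * (l * x) + mu * (l * y) := by ring
    calc C * Real.exp (l * (th * x + mu * y))
        = C * Real.exp (th * (l * x) + mu * (l * y)) := by rw [hx]
      _ ≤ C * (th * Real.exp (l * x) + mu * Real.exp (l * y)) :=
          mul_le_mul_of_nonneg_left h hC
      _ = th * (C * Real.exp (l * x)) + mu * (C * Real.exp (l * y)) := by ring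

lemma aux_strictConvexOn (C l : ℝ) (hC : 0 < C) (hl : l ≠ 0) :
    StrictConvexOn ℝ Set.univ (fun x => C * Real.exp (l * x)) := by
  constructor
  · exact convex_univ
  · intro x _ y _ hxy th mu hth hmu hthmu
    have hne : l * x ≠ l * y := fun h => hxy (mul_left_cancel₀ hl h)
    have h := strictConvexOn_exp.2 (Set.mem_univ (l * x)) (Set.mem_univ (l * y)) hne hth hmu hthmu
    simp only [smul_eq_mul] at *
    have hx : l * (th * x + mu * y) = th * (l * x) + mu * (l * y) := by ring
    calc C * Real.exp (l * (th * x + mu * y))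
        = C * Real.exp (th * (l * x) + mu * (l * y)) := by rw [hx]
      _ < C * (th * Real.exp (l * x) + mu * Real.exp (l * y)) :=
          mul_lt_mul_of_pos_left h hC
      _ = th * (C * Real.exp (l * x)) + mu * (C * Real.exp (l * y)) := by ring

lemma aux_sum3 (C1 C2 C3 l1 l2 l3 : ℝ) (h1 : 0 ≤ C1) (h2 : 0 < C2) (h3 : 0 < C3)
    (hl2 : l2 ≠ 0) (hl3 : l3 ≠ 0) :
    StrictConvexOn ℝ Set.univ (fun x => C1 * Real.exp (l1 * x) +
      (C2 * Real.exp (l2 * x) + C3 * Real.exp (l3 * x))) := by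
  have h := (aux_convexOn C1 l1 h1).add_strictConvexOn
    ((aux_strictConvexOn C2 l2 h2 hl2).add (aux_strictConvexOn C3 l3 h3 hl3))
  simpa [Pi.add_def] using h

lemma aux_level_set (F : ℝ → ℝ) (hF : StrictConvexOn ℝ Set.univ F) (v : ℝ) :
    Set.encard {x : ℝ | F x = v} ≤ 2 := by
  set S := {x : ℝ | F x = v} with hS
  have key : ∀ x y z : ℝ, x < y → y < z → x ∈ S → y ∈ S → z ∈ S → False := by
    intro x y z hxy hyz hx hy hz
    have hxz : x < z := hxy.trans hyz
    set th := (z - y) / (z - x) with hthdef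
    set mu := (y - x) / (z - x) with hmudef
    have hzx : (0:ℝ) < z - x := by linarith
    have hth : 0 < th := div_pos (by linarith) hzx
    have hmu : 0 < mu := div_pos (by linarith) hzx
    have hthmu : th + mu = 1 := by
      rw [hthdef, hmudef, ← add_div, div_eq_one_iff_eq (ne_of_gt hzx)]
      ring
    have hcomb : th • x + mu • z = y := by
      simp only [smul_eq_mul, hthdef, hmudef]
      field_simp
      ring
    have h := hF.2 (Set.mem_univ x) (Set.mem_univ z) (ne_of_lt hxz) hth hmu hthmu
    rw [hcomb] at h
    have hx' : F x = v := hx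
    have hy' : F y = v := hy
    have hz' : F z = v := hz
    rw [hx', hy', hz'] at h
    simp only [smul_eq_mul] at h
    have hv : th * v + mu * v = v := by rw [← add_mul, hthmu, one_mul]
    linarith
  by_contra hcon
  push_neg at hcon
  have h3 : (3 : ℕ∞) ≤ S.encard := by
    exact Order.add_one_le_of_lt hcon
  obtain ⟨t, hts, ht3⟩ := Set.exists_subset_encard_eq h3
  obtain ⟨x, y, z, hxy, hxz, hyz, rfl⟩ := Set.encard_eq_three.1 ht3
  have hx : x ∈ S := hts (by simp)
  have hy : y ∈ S := hts (by simp)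
  have hz : z ∈ S := hts (by simp)
  rcases lt_trichotomy x y with h1 | h1 | h1
  · rcases lt_trichotomy y z with h2 | h2 | h2
    · exact key x y z h1 h2 hx hy hz
    · exact hyz h2
    · rcases lt_trichotomy x z with h3' | h3' | h3'
      · exact key x z y h3' h2 hx hz hy
      · exact hxz h3'
      · exact key z x y h3' h1 hz hx hy
  · exact hxy h1
  · rcases lt_trichotomy x z with h2 | h2 | h2
    · exact key y x z h1 h2 hy hx hz
    · exact hxz h2
    · rcases lt_trichotomy y z with h3' | h3' | h3'
      · exact key y z x h3' h2 hy hz hx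
      · exact hyz h3'
      · exact key z y x h3' h1 hz hy hx

theorem stmt_1 (N : ℕ) (hN : 3 ≤ N) (a b c d p q r γp γq γr : ℝ)
    (ha : 0 < a) (hb : 0 < b) (hc : 0 < c) (hd : 0 < d)
    (hp1 : 2 < p) (hpbar : p < 2 + 4 / N)
    (hq1 : 2 + 4 / N < q) (hq2 : q ≤ 2 * N / ((N : ℝ) - 2))
    (hr1 : 2 < r) (hr2 : r < 2 * N / ((N : ℝ) - 2))
    (hγp : γp = (N : ℝ) * (p - 2) / (2 * p))
    (hγq : γq = (N : ℝ) * (q - 2) / (2 * q))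
    (hγr : γr = (N : ℝ) * (r - 2) / (2 * r)) :
    Set.encard {t : ℝ | 0 < t ∧
      deriv (fun t : ℝ => a * t ^ (2 : ℝ) - b * t ^ (r * γr)
        - c * t ^ (p * γp) - d * t ^ (q * γq)) t = 0} ≤ 2 := by
  have hN0 : (0:ℝ) < N := by positivity
  -- identify the products
  have hp0 : p ≠ 0 := by linarith
  have hq0 : q ≠ 0 := by linarith
  have hr0 : r ≠ 0 := by linarith
  have hP : p * γp = (N : ℝ) * (p - 2) / 2 := by
    rw [hγp]; field_simp
  have hK : q * γq = (N : ℝ) * (q - 2) / 2 := by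
    rw [hγq]; field_simp
  have hR9 : r * γr = (N : ℝ) * (r - 2) / 2 := by
    rw [hγr]; field_simp
  set P : ℝ := p * γp with hPdef
  set K : ℝ := q * γq with hKdef
  set R9 : ℝ := r * γr with hR9def
  have hPpos : 0 < P := by rw [hP]; nlinarith
  have hKpos : 0 < K := by rw [hK]; nlinarith [div_pos (by norm_num : (0:ℝ) < 4) hN0]
  have hR9pos : 0 < R9 := by rw [hR9]; nlinarith
  have hPlt : P < 2 := by
    rw [hP]
    have h4 : (N : ℝ) * (p - 2) < 4 := by
      have := (mul_lt_mul_of_pos_left hpbar hN0)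
      have h4N : (N:ℝ) * (4 / N) = 4 := by field_simp
      nlinarith
    linarith
  have hKgt : 2 < K := by
    rw [hK]
    have h4 : (4:ℝ) < (N : ℝ) * (q - 2) := by
      have := (mul_lt_mul_of_pos_left hq1 hN0)
      have h4N : (N:ℝ) * (4 / N) = 4 := by field_simp
      nlinarith
    linarith
  -- the convex comparison function
  set F : ℝ → ℝ := fun x => b * R9 * Real.exp ((R9 - 2) * x) +
      (c * P * Real.exp ((P - 2) * x) + d * K * Real.exp ((K - 2) * x)) with hFdef
  have hFconv : StrictConvexOn ℝ Set.univ F :=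
    aux_sum3 (b * R9) (c * P) (d * K) (R9 - 2) (P - 2) (K - 2)
      (by positivity) (by positivity) (by positivity) (by linarith) (by linarith)
  set T : Set ℝ := {x : ℝ | F x = 2 * a} with hTdef
  have hsub : {t : ℝ | 0 < t ∧
      deriv (fun t : ℝ => a * t ^ (2 : ℝ) - b * t ^ R9
        - c * t ^ P - d * t ^ K) t = 0} ⊆ Real.exp '' T := by
    rintro t ⟨ht, hderiv⟩
    have htne : t ≠ 0 := ne_of_gt ht
    -- compute the derivative
    have h1 : HasDerivAt (fun t : ℝ => a * t ^ (2:ℝ)) (a * ((2:ℝ) * t ^ ((2:ℝ) - 1))) t :=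
      (Real.hasDerivAt_rpow_const (Or.inl htne)).const_mul a
    have h2 : HasDerivAt (fun t : ℝ => b * t ^ R9) (b * (R9 * t ^ (R9 - 1))) t :=
      (Real.hasDerivAt_rpow_const (Or.inl htne)).const_mul b
    have h3 : HasDerivAt (fun t : ℝ => c * t ^ P) (c * (P * t ^ (P - 1))) t :=
      (Real.hasDerivAt_rpow_const (Or.inl htne)).const_mul c
    have h4 : HasDerivAt (fun t : ℝ => d * t ^ K) (d * (K * t ^ (K - 1))) t :=
      (Real.hasDerivAt_rpow_const (Or.inl htne)).const_mul d
    have hD : HasDerivAt (fun t : ℝ => a * t ^ (2 : ℝ) - b * t ^ R9 - c * t ^ P - d * t ^ K)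
        (a * ((2:ℝ) * t ^ ((2:ℝ) - 1)) - b * (R9 * t ^ (R9 - 1)) - c * (P * t ^ (P - 1))
          - d * (K * t ^ (K - 1))) t := ((h1.sub h2).sub h3).sub h4
    rw [hD.deriv] at hderiv
    -- rewrite exponents
    have e1 : t ^ ((2:ℝ) - 1) = t := by norm_num
    have erw : ∀ s : ℝ, t ^ (s - 1) = t ^ (s - 2) * t := by
      intro s
      have : s - 1 = (s - 2) + 1 := by ring
      rw [this, Real.rpow_add_one htne]
    rw [e1, erw R9, erw P, erw K] at hderiv
    refine ⟨Real.log t, ?_, Real.exp_log ht⟩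
    have hexp : ∀ s : ℝ, Real.exp ((s - 2) * Real.log t) = t ^ (s - 2) := by
      intro s
      rw [Real.rpow_def_of_pos ht, mul_comm]
    show F (Real.log t) = 2 * a
    rw [hFdef]
    simp only [hexp]
    have hzero : (2 * a - (b * R9 * t ^ (R9 - 2) + (c * P * t ^ (P - 2) + d * K * t ^ (K - 2))))
        * t = 0 := by linear_combination hderiv
    rcases mul_eq_zero.1 hzero with h | h
    · linarith
    · exact absurd h htne
  calc Set.encard {t : ℝ | 0 < t ∧
      deriv (fun t : ℝ => a * t ^ (2 : ℝ) - b * t ^ (r * γr)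
        - c * t ^ (p * γp) - d * t ^ (q * γq)) t = 0}
      ≤ Set.encard (Real.exp '' T) := Set.encard_le_encard hsub
    _ ≤ Set.encard T := Set.encard_image_le _ _
    _ ≤ 2 := aux_level_set F hFconv (2 * a)
end

section
/- Let N ≥ 3, a, c, d > 0 and exponents α, β with 0 < α < 2 < β. Then the function l(t) = a t² − c t^α − d t^β on (0, ∞) satisfies: l(0+) = 0⁻ (l is negative near 0), l(+∞) = −∞, and l has at most two critical points on (0, ∞); moreover if l attains a positive value somewhere, then l has exactly two critical points: a local minimum at negative level and a global maximum at positive level. -/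
open Real Filter Set Topology

theorem stmt_2 (a c d α β : ℝ) (ha : 0 < a) (hc : 0 < c) (hd : 0 < d)
    (hα0 : 0 < α) (hα2 : α < 2) (hβ : 2 < β)
    (l : ℝ → ℝ) (hl : l = fun t => a * t ^ (2 : ℝ) - c * t ^ α - d * t ^ β) :
    (∃ ε > 0, ∀ t, 0 < t → t < ε → l t < 0) ∧
    Filter.Tendsto l Filter.atTop Filter.atBot ∧
    Set.encard {t : ℝ | 0 < t ∧ deriv l t = 0} ≤ 2 ∧
    ((∃ t, 0 < t ∧ 0 < l t) →
      ∃ t₁ t₂ : ℝ, 0 < t₁ ∧ t₁ < t₂ ∧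
        {t : ℝ | 0 < t ∧ deriv l t = 0} = {t₁, t₂} ∧
        IsLocalMin l t₁ ∧ l t₁ < 0 ∧
        (∀ t, 0 < t → l t ≤ l t₂) ∧ 0 < l t₂) := by
  have hβ2 : (0:ℝ) < β - 2 := by linarith
  have hα2' : (0:ℝ) < 2 - α := by linarith
  have he : (0:ℝ) < β - α := by linarith
  set g : ℝ → ℝ := fun t => c * α * t ^ (α - 2) + d * β * t ^ (β - 2) with hg
  -- derivative of l
  have hld : ∀ t : ℝ, 0 < t → HasDerivAt l (t * (2 * a - g t)) t := by
    intro t ht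
    have h2 : HasDerivAt (fun x : ℝ => x ^ (2 : ℝ)) (2 * t ^ ((2 : ℝ) - 1)) t :=
      Real.hasDerivAt_rpow_const (Or.inl ht.ne')
    have hA : HasDerivAt (fun x : ℝ => x ^ α) (α * t ^ (α - 1)) t :=
      Real.hasDerivAt_rpow_const (Or.inl ht.ne')
    have hB : HasDerivAt (fun x : ℝ => x ^ β) (β * t ^ (β - 1)) t :=
      Real.hasDerivAt_rpow_const (Or.inl ht.ne')
    have H := ((h2.const_mul a).sub (hA.const_mul c)).sub (hB.const_mul d)
    rw [hl]
    refine HasDerivAt.congr_deriv H ?_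
    have key : ∀ p : ℝ, t ^ (p - 1) = t ^ (p - 2) * t := by
      intro p
      rw [← Real.rpow_add_one ht.ne' (p - 2)]
      ring_nf
    rw [key α, key β, show ((2:ℝ) - 1) = 1 by norm_num, Real.rpow_one, hg]
    ring
  have hldd : ∀ t : ℝ, 0 < t → deriv l t = t * (2 * a - g t) := fun t ht => (hld t ht).deriv
  have lcont : ContinuousOn l (Ioi 0) := fun t ht =>
    ((hld t ht).continuousAt).continuousWithinAt
  -- derivative of g
  have hgd : ∀ t : ℝ, 0 < t →
      HasDerivAt g (t ^ (α - 3) * (c * α * (α - 2) + d * β * (β - 2) * t ^ (β - α))) t := by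
    intro t ht
    have hA : HasDerivAt (fun x : ℝ => x ^ (α - 2)) ((α - 2) * t ^ (α - 2 - 1)) t :=
      Real.hasDerivAt_rpow_const (Or.inl ht.ne')
    have hB : HasDerivAt (fun x : ℝ => x ^ (β - 2)) ((β - 2) * t ^ (β - 2 - 1)) t :=
      Real.hasDerivAt_rpow_const (Or.inl ht.ne')
    have H := (hA.const_mul (c * α)).add (hB.const_mul (d * β))
    refine HasDerivAt.congr_deriv H ?_
    have e1 : t ^ (β - 2 - 1) = t ^ (α - 3) * t ^ (β - α) := by
      rw [← Real.rpow_add ht]; ring_nf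
    have e2 : (α - 2 - 1 : ℝ) = α - 3 := by ring
    rw [e1, e2]
    ring
  have hden : (0:ℝ) < d * β * (β - 2) := by positivity
  set M : ℝ := c * α * (2 - α) / (d * β * (β - 2)) with hM
  have hMpos : 0 < M := by positivity
  set t₀ : ℝ := M ^ (β - α)⁻¹ with ht₀
  have ht₀pos : 0 < t₀ := Real.rpow_pos_of_pos hMpos _
  have ht₀M : t₀ ^ (β - α) = M := Real.rpow_inv_rpow hMpos.le he.ne'
  have hMeq : d * β * (β - 2) * M = c * α * (2 - α) := by
    rw [hM]; field_simp
  have hgdneg : ∀ t : ℝ, 0 < t → t < t₀ → deriv g t < 0 := by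
    intro t ht htl
    rw [(hgd t ht).deriv]
    have h1 : t ^ (β - α) < M := by
      calc t ^ (β - α) < t₀ ^ (β - α) := Real.rpow_lt_rpow ht.le htl he
        _ = M := ht₀M
    have h2 : d * β * (β - 2) * t ^ (β - α) < c * α * (2 - α) := by
      calc d * β * (β - 2) * t ^ (β - α) < d * β * (β - 2) * M :=
            (mul_lt_mul_iff_right₀ hden).mpr h1
        _ = c * α * (2 - α) := hMeq
    have h3 : c * α * (α - 2) + d * β * (β - 2) * t ^ (β - α) < 0 := by nlinarith
    exact mul_neg_of_pos_of_neg (Real.rpow_pos_of_pos ht _) h3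
  have hgdpos : ∀ t : ℝ, t₀ < t → 0 < deriv g t := by
    intro t htl
    have ht : 0 < t := ht₀pos.trans htl
    rw [(hgd t ht).deriv]
    have h1 : M < t ^ (β - α) := by
      calc M = t₀ ^ (β - α) := ht₀M.symm
        _ < t ^ (β - α) := Real.rpow_lt_rpow ht₀pos.le htl he
    have h2 : c * α * (2 - α) < d * β * (β - 2) * t ^ (β - α) := by
      calc c * α * (2 - α) = d * β * (β - 2) * M := hMeq.symm
        _ < d * β * (β - 2) * t ^ (β - α) := (mul_lt_mul_iff_right₀ hden).mpr h1
    have h3 : 0 < c * α * (α - 2) + d * β * (β - 2) * t ^ (β - α) := by nlinarith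
    exact mul_pos (Real.rpow_pos_of_pos ht _) h3
  have hgc : ContinuousOn g (Ioi 0) := fun t ht =>
    ((hgd t ht).continuousAt).continuousWithinAt
  have ganti : StrictAntiOn g (Ioc 0 t₀) := by
    apply strictAntiOn_of_deriv_neg (convex_Ioc 0 t₀) (hgc.mono (fun x hx => hx.1))
    intro x hx
    rw [interior_Ioc] at hx
    exact hgdneg x hx.1 hx.2
  have gmono : StrictMonoOn g (Ici t₀) := by
    apply strictMonoOn_of_deriv_pos (convex_Ici t₀)
      (hgc.mono (fun x hx => lt_of_lt_of_le ht₀pos hx))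
    intro x hx
    rw [interior_Ici] at hx
    exact hgdpos x hx
  -- characterization of the critical set
  have Scrit : ∀ t : ℝ, 0 < t → (deriv l t = 0 ↔ g t = 2 * a) := by
    intro t ht
    rw [hldd t ht]
    constructor
    · intro h
      rcases mul_eq_zero.mp h with h' | h'
      · exact absurd h' ht.ne'
      · linarith [sub_eq_zero.mp h']
    · intro h; rw [h]; ring
  -- Part 1 : negative near zero
  have part1 : ∃ ε > 0, ∀ t, 0 < t → t < ε → l t < 0 := by
    have hcont : ContinuousAt (fun t : ℝ => a * t ^ ((2:ℝ) - α)) 0 :=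
      (Real.continuousAt_rpow_const 0 _ (Or.inr hα2'.le)).const_mul a
    have h0 : a * (0:ℝ) ^ ((2:ℝ) - α) = 0 := by
      rw [Real.zero_rpow hα2'.ne']; ring
    have hev : ∀ᶠ t in 𝓝[>] (0:ℝ), a * t ^ ((2:ℝ) - α) < c := by
      apply Filter.Eventually.filter_mono nhdsWithin_le_nhds
      have := hcont.tendsto
      rw [h0] at this
      exact this.eventually_lt_const hc
    have hev2 : ∀ᶠ t in 𝓝[>] (0:ℝ), l t < 0 := by
      filter_upwards [hev, self_mem_nhdsWithin] with t h1 h2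
      have ht : (0:ℝ) < t := h2
      have e1 : t ^ (2:ℝ) = t ^ α * t ^ ((2:ℝ) - α) := by
        rw [← Real.rpow_add ht]; ring_nf
      have h3 : a * t ^ (2:ℝ) < c * t ^ α := by
        rw [e1]
        calc a * (t ^ α * t ^ ((2:ℝ) - α)) = t ^ α * (a * t ^ ((2:ℝ) - α)) := by ring
          _ < t ^ α * c := (mul_lt_mul_iff_right₀ (Real.rpow_pos_of_pos ht α)).mpr h1
          _ = c * t ^ α := by ring
      have h4 : 0 < d * t ^ β := by positivity
      rw [hl]; dsimp only; linarith
    obtain ⟨u, hu, hsub⟩ := mem_nhdsGT_iff_exists_Ioo_subset.mp hev2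
    exact ⟨u, hu, fun t ht0 htu => hsub ⟨ht0, htu⟩⟩
  refine ⟨part1, ?_, ?_, ?_⟩
  -- Part 2 : tendsto atBot
  · have h1 : Tendsto (fun t : ℝ => a - d * t ^ (β - 2)) atTop atBot := by
      apply Filter.tendsto_atBot_add_const_left _ a
      have := (tendsto_rpow_atTop hβ2).const_mul_atTop hd
      exact tendsto_neg_atBot_iff.mpr this
    have h2 : Tendsto (fun t : ℝ => t ^ (2:ℝ) * (a - d * t ^ (β - 2))) atTop atBot :=
      Filter.Tendsto.atTop_mul_atBot₀ (tendsto_rpow_atTop two_pos) h1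
    apply tendsto_atBot_mono' atTop _ h2
    filter_upwards [eventually_gt_atTop (0:ℝ)] with t ht
    have e1 : t ^ β = t ^ (2:ℝ) * t ^ (β - 2) := by
      rw [← Real.rpow_add ht]; ring_nf
    have h3 : 0 ≤ c * t ^ α := by positivity
    rw [hl]; dsimp only
    rw [e1]; nlinarith
  -- Part 3 : at most two critical points
  · set S : Set ℝ := {t : ℝ | 0 < t ∧ deriv l t = 0} with hS
    have hsplit : S ⊆ (S ∩ Ioc 0 t₀) ∪ (S ∩ Ici t₀) := by
      intro x hx
      rcases le_total x t₀ with h | h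
      · exact Or.inl ⟨hx, hx.1, h⟩
      · exact Or.inr ⟨hx, h⟩
    calc S.encard ≤ ((S ∩ Ioc 0 t₀) ∪ (S ∩ Ici t₀)).encard := Set.encard_mono hsplit
      _ ≤ (S ∩ Ioc 0 t₀).encard + (S ∩ Ici t₀).encard := Set.encard_union_le _ _
      _ ≤ 1 + 1 := by
          gcongr
          · rw [Set.encard_le_one_iff]
            intro x y hx hy
            have hgx : g x = 2 * a := (Scrit x hx.1.1).mp hx.1.2
            have hgy : g y = 2 * a := (Scrit y hy.1.1).mp hy.1.2
            exact ganti.injOn hx.2 hy.2 (hgx.trans hgy.symm)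
          · rw [Set.encard_le_one_iff]
            intro x y hx hy
            have hgx : g x = 2 * a := (Scrit x hx.1.1).mp hx.1.2
            have hgy : g y = 2 * a := (Scrit y hy.1.1).mp hy.1.2
            exact gmono.injOn hx.2 hy.2 (hgx.trans hgy.symm)
      _ = 2 := by norm_num
  -- Part 4
  · rintro ⟨s, hs, hls⟩
    obtain ⟨ε, hε, hεneg⟩ := part1
    -- Step A : g t₀ < 2 a
    have hgt₀ : g t₀ < 2 * a := by
      by_contra h
      push_neg at h
      have hge : ∀ t : ℝ, 0 < t → 2 * a ≤ g t := by
        intro t ht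
        rcases lt_trichotomy t t₀ with h' | h' | h'
        · exact h.trans (ganti ⟨ht, h'.le⟩ ⟨ht₀pos, le_refl _⟩ h').le
        · rw [h']; exact h
        · exact h.trans (gmono (self_mem_Ici) h'.le h').le
      have hderivle : ∀ t ∈ interior (Ioi (0:ℝ)), deriv l t ≤ 0 := by
        intro t ht
        rw [interior_Ioi] at ht
        rw [hldd t ht]
        have := hge t ht
        exact mul_nonpos_of_nonneg_of_nonpos ht.le (by linarith)
      have lanti : AntitoneOn l (Ioi 0) :=
        antitoneOn_of_deriv_nonpos (convex_Ioi 0) lcont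
          (fun t ht => by
            rw [interior_Ioi] at ht
            exact (hld t ht).differentiableAt.differentiableWithinAt) hderivle
      set u : ℝ := min (ε / 2) s with hu
      have hu0 : 0 < u := lt_min (by linarith) hs
      have hus : u ≤ s := min_le_right _ _
      have huε : u < ε := lt_of_le_of_lt (min_le_left _ _) (by linarith)
      have := lanti (Set.mem_Ioi.mpr hu0) (Set.mem_Ioi.mpr hs) hus
      have := hεneg u hu0 huε
      linarith
    -- Step B : a point u₁ ∈ (0, t₀) with g u₁ > 2 a
    have htend0 : Tendsto g (𝓝[>] (0:ℝ)) atTop := by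
      have h1 : Tendsto (fun t : ℝ => t ^ (α - 2)) (𝓝[>] (0:ℝ)) atTop := by
        have h2 : Tendsto (fun t : ℝ => (t⁻¹) ^ ((2:ℝ) - α)) (𝓝[>] (0:ℝ)) atTop :=
          (tendsto_rpow_atTop hα2').comp tendsto_inv_nhdsGT_zero
        apply h2.congr'
        filter_upwards [self_mem_nhdsWithin] with t ht
        have ht' : (0:ℝ) < t := ht
        rw [← Real.rpow_neg_one t, ← Real.rpow_mul ht'.le]
        ring_nf
      have h3 : Tendsto (fun t : ℝ => c * α * t ^ (α - 2)) (𝓝[>] (0:ℝ)) atTop :=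
        h1.const_mul_atTop (by positivity)
      apply tendsto_atTop_mono' _ _ h3
      filter_upwards [self_mem_nhdsWithin] with t ht
      have ht' : (0:ℝ) < t := ht
      have : 0 ≤ d * β * t ^ (β - 2) := by positivity
      rw [hg]; dsimp only; linarith
    have hBex : ∃ u₁ : ℝ, 0 < u₁ ∧ u₁ < t₀ ∧ 2 * a < g u₁ := by
      have h1 : ∀ᶠ t in 𝓝[>] (0:ℝ), 2 * a < g t := htend0.eventually_gt_atTop _
      have h2 : ∀ᶠ t in 𝓝[>] (0:ℝ), t < t₀ :=
        Filter.Eventually.filter_mono nhdsWithin_le_nhds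
          (Filter.Tendsto.eventually_lt_const ht₀pos tendsto_id)
      obtain ⟨u₁, hg1, hlt, hpos⟩ := (h1.and (h2.and self_mem_nhdsWithin)).exists
      exact ⟨u₁, hpos, hlt, hg1⟩
    obtain ⟨u₁, hu₁0, hu₁t₀, hgu₁⟩ := hBex
    -- Step C : a point v > t₀ with g v > 2 a
    have htendtop : Tendsto g atTop atTop := by
      have h1 : Tendsto (fun t : ℝ => d * β * t ^ (β - 2)) atTop atTop :=
        (tendsto_rpow_atTop hβ2).const_mul_atTop (by positivity)
      apply tendsto_atTop_mono' _ _ h1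
      filter_upwards [eventually_gt_atTop (0:ℝ)] with t ht
      have : 0 ≤ c * α * t ^ (α - 2) := by positivity
      rw [hg]; dsimp only; linarith
    have hCex : ∃ v : ℝ, t₀ < v ∧ 2 * a < g v := by
      obtain ⟨v, h1, h2⟩ := ((htendtop.eventually_gt_atTop (2 * a)).and
        (eventually_gt_atTop t₀)).exists
      exact ⟨v, h2, h1⟩
    obtain ⟨v, hvt₀, hgv⟩ := hCex
    -- Step D : t₁ via IVT on [u₁, t₀]
    have hIcc1 : Icc u₁ t₀ ⊆ Ioi 0 := fun x hx => lt_of_lt_of_le hu₁0 hx.1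
    have hIVT1 := intermediate_value_Icc' hu₁t₀.le (hgc.mono hIcc1)
    obtain ⟨t₁, ht₁mem, hgt₁⟩ := hIVT1 ⟨hgt₀.le, hgu₁.le⟩
    have ht₁0 : 0 < t₁ := lt_of_lt_of_le hu₁0 ht₁mem.1
    have ht₁t₀ : t₁ < t₀ := lt_of_le_of_ne ht₁mem.2 (by
      intro h; rw [h] at hgt₁; linarith)
    -- Step E : t₂ via IVT on [t₀, v]
    have hIcc2 : Icc t₀ v ⊆ Ioi 0 := fun x hx => lt_of_lt_of_le ht₀pos hx.1
    have hIVT2 := intermediate_value_Icc hvt₀.le (hgc.mono hIcc2)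
    obtain ⟨t₂, ht₂mem, hgt₂⟩ := hIVT2 ⟨hgt₀.le, hgv.le⟩
    have ht₂t₀ : t₀ < t₂ := lt_of_le_of_ne ht₂mem.1 (by
      intro h; rw [← h] at hgt₂; linarith)
    have ht₂0 : 0 < t₂ := ht₀pos.trans ht₂t₀
    have ht₁t₂ : t₁ < t₂ := ht₁t₀.trans ht₂t₀
    -- Step F : the critical set is {t₁, t₂}
    have hSet : {t : ℝ | 0 < t ∧ deriv l t = 0} = {t₁, t₂} := by
      ext x
      simp only [Set.mem_setOf_eq, Set.mem_insert_iff, Set.mem_singleton_iff]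
      constructor
      · rintro ⟨hx0, hxd⟩
        have hgx : g x = 2 * a := (Scrit x hx0).mp hxd
        rcases le_total x t₀ with h | h
        · left
          exact ganti.injOn ⟨hx0, h⟩ ⟨ht₁0, ht₁t₀.le⟩ (hgx.trans hgt₁.symm)
        · right
          exact gmono.injOn h ht₂t₀.le (hgx.trans hgt₂.symm)
      · rintro (rfl | rfl)
        · exact ⟨ht₁0, (Scrit _ ht₁0).mpr hgt₁⟩
        · exact ⟨ht₂0, (Scrit _ ht₂0).mpr hgt₂⟩
    -- Step G : sign of deriv l
    have dsign1 : ∀ t ∈ Ioo (0:ℝ) t₁, deriv l t < 0 := by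
      intro t ht
      rw [hldd t ht.1]
      have : g t₁ < g t := ganti ⟨ht.1, (ht.2.trans ht₁t₀).le⟩ ⟨ht₁0, ht₁t₀.le⟩ ht.2
      rw [hgt₁] at this
      exact mul_neg_of_pos_of_neg ht.1 (by linarith)
    have dsign2 : ∀ t ∈ Ioo t₁ t₂, 0 < deriv l t := by
      intro t ht
      have ht0 : 0 < t := ht₁0.trans ht.1
      rw [hldd t ht0]
      have hgl : g t < 2 * a := by
        rcases le_total t t₀ with h | h
        · have := ganti ⟨ht₁0, ht₁t₀.le⟩ ⟨ht0, h⟩ ht.1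
          rw [hgt₁] at this; exact this
        · have := gmono (Set.mem_Ici.mpr h) ht₂t₀.le ht.2
          rw [hgt₂] at this; exact this
      exact mul_pos ht0 (by linarith)
    have dsign3 : ∀ t ∈ Ioi t₂, deriv l t < 0 := by
      intro t ht
      have ht' : t₂ < t := ht
      have ht0 : 0 < t := ht₂0.trans ht'
      rw [hldd t ht0]
      have := gmono ht₂t₀.le (ht₂t₀.trans ht').le ht'
      rw [hgt₂] at this
      exact mul_neg_of_pos_of_neg ht0 (by linarith)
    -- Step H : monotonicity of l
    have lanti1 : StrictAntiOn l (Ioc 0 t₁) := by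
      apply strictAntiOn_of_deriv_neg (convex_Ioc 0 t₁) (lcont.mono (fun x hx => hx.1))
      intro x hx
      rw [interior_Ioc] at hx
      exact dsign1 x hx
    have lmono : StrictMonoOn l (Icc t₁ t₂) := by
      apply strictMonoOn_of_deriv_pos (convex_Icc t₁ t₂)
        (lcont.mono (fun x hx => lt_of_lt_of_le ht₁0 hx.1))
      intro x hx
      rw [interior_Icc] at hx
      exact dsign2 x hx
    have lanti2 : StrictAntiOn l (Ici t₂) := by
      apply strictAntiOn_of_deriv_neg (convex_Ici t₂)
        (lcont.mono (fun x hx => lt_of_lt_of_le ht₂0 hx))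
      intro x hx
      rw [interior_Ici] at hx
      exact dsign3 x hx
    -- Step I : l < 0 on (0, t₁]
    have lneg : ∀ t ∈ Ioc (0:ℝ) t₁, l t < 0 := by
      intro t ht
      rcases lt_or_ge t ε with h | h
      · exact hεneg t ht.1 h
      · have hu0 : (0:ℝ) < ε / 2 := by linarith
        have huT : ε / 2 < t := by linarith
        have h1 : l t < l (ε / 2) :=
          lanti1 ⟨hu0, (huT.trans_le ht.2).le⟩ ht huT
        have h2 : l (ε / 2) < 0 := hεneg _ hu0 (by linarith)
        linarith
    have hlt₁ : l t₁ < 0 := lneg t₁ ⟨ht₁0, le_refl _⟩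
    -- Step J : global max and positivity at t₂
    have hst₁ : t₁ < s := by
      by_contra h
      push_neg at h
      exact absurd hls (not_lt.mpr (lneg s ⟨hs, h⟩).le)
    have hlst₂ : l s ≤ l t₂ := by
      rcases le_total s t₂ with h | h
      · rcases eq_or_lt_of_le h with rfl | h'
        · exact le_refl _
        · exact (lmono ⟨hst₁.le, h⟩ ⟨ht₁t₂.le, le_refl _⟩ h').le
      · rcases eq_or_lt_of_le h with h' | h'
        · rw [h']
        · exact (lanti2 (self_mem_Ici) h h').le
    have hlt₂pos : 0 < l t₂ := lt_of_lt_of_le hls hlst₂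
    have hmax : ∀ t, 0 < t → l t ≤ l t₂ := by
      intro t ht
      rcases le_total t t₁ with h | h
      · exact (lneg t ⟨ht, h⟩).le.trans hlt₂pos.le
      · rcases le_total t t₂ with h2 | h2
        · rcases eq_or_lt_of_le h2 with rfl | h2'
          · exact le_refl _
          · exact (lmono ⟨h, h2⟩ ⟨ht₁t₂.le, le_refl _⟩ h2').le
        · rcases eq_or_lt_of_le h2 with h2' | h2'
          · rw [h2']
          · exact (lanti2 (self_mem_Ici) h2 h2').le
    -- Step K : local min at t₁
    have hlocmin : IsLocalMin l t₁ := by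
      have hnb : Ioo (0:ℝ) t₂ ∈ 𝓝 t₁ := Ioo_mem_nhds ht₁0 ht₁t₂
      filter_upwards [hnb] with t ht
      rcases le_total t t₁ with h | h
      · rcases eq_or_lt_of_le h with rfl | h'
        · exact le_refl _
        · exact (lanti1 ⟨ht.1, h⟩ ⟨ht₁0, le_refl _⟩ h').le
      · rcases eq_or_lt_of_le h with rfl | h'
        · exact le_refl _
        · exact (lmono ⟨le_refl _, ht₁t₂.le⟩ ⟨h, ht.2.le⟩ h').le
    exact ⟨t₁, t₂, ht₁0, ht₁t₂, hSet, hlocmin, hlt₁, hmax, hlt₂pos⟩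
end

section
/- Let h(t) = (1/2)t² − B t^{ρ} − C t^{σ} − D t^{τ} with B, C, D > 0 and exponents 0 < σ < ρ < 2 < τ. Suppose there exists t̄ > 0 with h(t̄) > 0. Then there exist 0 < R₀ < R₁ such that h(R₀) = h(R₁) = 0 and h(t) > 0 if and only if t ∈ (R₀, R₁); furthermore h has exactly two critical points on (0, ∞): a local minimum at negative level located in (0, R₀) and a global maximum at positive level located in (R₀, R₁). -/
open Set Filter Topology

private lemma rpow_tendsto_atTop_zero {e : ℝ} (he : e < 0) :
    Tendsto (fun t : ℝ => t ^ e) (𝓝[>] (0 : ℝ)) atTop := by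
  have h1 : Tendsto (fun t : ℝ => t ^ (-e)) (𝓝[>] (0 : ℝ)) (𝓝[>] (0 : ℝ)) := by
    rw [tendsto_nhdsWithin_iff]
    constructor
    · have hc : ContinuousAt (fun t : ℝ => t ^ (-e)) 0 :=
        Real.continuousAt_rpow_const 0 (-e) (Or.inr (by linarith))
      have h0 : (0 : ℝ) ^ (-e) = 0 := Real.zero_rpow (by linarith)
      have := hc.continuousWithinAt (s := Ioi (0 : ℝ))
      simpa [ContinuousWithinAt, h0] using this
    · exact eventually_mem_nhdsWithin.mono fun t ht =>
        Real.rpow_pos_of_pos ht (-e)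
  have h2 := tendsto_inv_nhdsGT_zero.comp h1
  refine h2.congr' ?_
  exact eventually_mem_nhdsWithin.mono fun t ht => by
    simp only [Function.comp]
    rw [← Real.rpow_neg (le_of_lt ht), neg_neg]

set_option maxHeartbeats 1000000 in
theorem stmt_3 (B C D ρ σ τ : ℝ) (hB : 0 < B) (hC : 0 < C) (hD : 0 < D)
    (hσ0 : 0 < σ) (hσρ : σ < ρ) (hρ2 : ρ < 2) (hτ : 2 < τ)
    (h : ℝ → ℝ)
    (hh : h = fun t => (1 / 2) * t ^ (2 : ℝ) - B * t ^ ρ - C * t ^ σ - D * t ^ τ)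
    (hpos : ∃ t, 0 < t ∧ 0 < h t) :
    ∃ R₀ R₁ : ℝ, 0 < R₀ ∧ R₀ < R₁ ∧ h R₀ = 0 ∧ h R₁ = 0 ∧
      (∀ t, 0 < t → (0 < h t ↔ R₀ < t ∧ t < R₁)) ∧
      ∃ t₁ t₂ : ℝ, 0 < t₁ ∧ t₁ < R₀ ∧ R₀ < t₂ ∧ t₂ < R₁ ∧
        IsLocalMin h t₁ ∧ h t₁ < 0 ∧
        (∀ t, 0 < t → h t ≤ h t₂) ∧ 0 < h t₂ ∧
        {t : ℝ | 0 < t ∧ deriv h t = 0} = {t₁, t₂} := by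
  have hρ0 : 0 < ρ := hσ0.trans hσρ
  have hτ0 : (0:ℝ) < τ := by linarith
  -- g and φ
  set g : ℝ → ℝ := fun t => 1 - B * ρ * t ^ (ρ - 2) - C * σ * t ^ (σ - 2) - D * τ * t ^ (τ - 2)
    with hgdef
  set φ : ℝ → ℝ := fun t => B * ρ * (2 - ρ) * t ^ (ρ - τ) + C * σ * (2 - σ) * t ^ (σ - τ)
    - D * τ * (τ - 2) with hφdef
  -- continuity of h
  have hcont : Continuous h := by
    rw [hh]
    have c2 : Continuous fun t : ℝ => t ^ (2:ℝ) := Real.continuous_rpow_const (by norm_num)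
    have cρ : Continuous fun t : ℝ => t ^ ρ := Real.continuous_rpow_const hρ0.le
    have cσ : Continuous fun t : ℝ => t ^ σ := Real.continuous_rpow_const hσ0.le
    have cτ : Continuous fun t : ℝ => t ^ τ := Real.continuous_rpow_const hτ0.le
    fun_prop
  have h0 : h 0 = 0 := by
    rw [hh]
    simp [Real.zero_rpow hρ0.ne', Real.zero_rpow hσ0.ne', Real.zero_rpow hτ0.ne',
      Real.zero_rpow (two_ne_zero (α := ℝ))]
  -- derivative of h
  have hd : ∀ t : ℝ, 0 < t → HasDerivAt h (t * g t) t := by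
    intro t ht
    have key : ∀ p : ℝ, t ^ (p - 1) = t * t ^ (p - 2) := by
      intro p
      rw [show p - 1 = 1 + (p - 2) by ring, Real.rpow_add ht, Real.rpow_one]
    have d2 := (Real.hasDerivAt_rpow_const (x := t) (p := 2) (Or.inl ht.ne')).const_mul (1/2 : ℝ)
    have dρ := (Real.hasDerivAt_rpow_const (x := t) (p := ρ) (Or.inl ht.ne')).const_mul B
    have dσ := (Real.hasDerivAt_rpow_const (x := t) (p := σ) (Or.inl ht.ne')).const_mul C
    have dτ := (Real.hasDerivAt_rpow_const (x := t) (p := τ) (Or.inl ht.ne')).const_mul D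
    have := ((d2.sub dρ).sub dσ).sub dτ
    rw [hh]
    refine this.congr_deriv ?_
    rw [hgdef]
    have k2 : t ^ ((2:ℝ) - 1) = t := by norm_num
    rw [k2, key ρ, key σ, key τ]
    ring
  have hderiv : ∀ t : ℝ, 0 < t → deriv h t = t * g t := fun t ht => (hd t ht).deriv
  -- derivative of g
  have hgd : ∀ t : ℝ, 0 < t → HasDerivAt g (t ^ (τ - 3) * φ t) t := by
    intro t ht
    have key : ∀ p : ℝ, t ^ (τ - 3) * t ^ (p - τ) = t ^ (p - 3) := by
      intro p
      rw [← Real.rpow_add ht]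
      ring_nf
    have dρ := ((Real.hasDerivAt_rpow_const (x := t) (p := ρ - 2)
      (Or.inl ht.ne')).const_mul (B * ρ))
    have dσ := ((Real.hasDerivAt_rpow_const (x := t) (p := σ - 2)
      (Or.inl ht.ne')).const_mul (C * σ))
    have dτ' := ((Real.hasDerivAt_rpow_const (x := t) (p := τ - 2)
      (Or.inl ht.ne')).const_mul (D * τ))
    have := (((hasDerivAt_const t (1:ℝ)).sub dρ).sub dσ).sub dτ'
    rw [hgdef]
    refine this.congr_deriv ?_
    have e1 : (ρ : ℝ) - 2 - 1 = ρ - 3 := by ring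
    have e2 : (σ : ℝ) - 2 - 1 = σ - 3 := by ring
    have e3 : (τ : ℝ) - 2 - 1 = τ - 3 := by ring
    rw [e1, e2, e3]
    have expand : t ^ (τ - 3) * φ t =
        B * ρ * (2 - ρ) * (t ^ (τ - 3) * t ^ (ρ - τ)) +
        C * σ * (2 - σ) * (t ^ (τ - 3) * t ^ (σ - τ)) -
        D * τ * (τ - 2) * t ^ (τ - 3) := by
      simp only [hφdef]; ring
    rw [expand, key ρ, key σ]
    ring
  have hgcontAt : ∀ t : ℝ, 0 < t → ContinuousAt g t :=
    fun t ht => (hgd t ht).differentiableAt.continuousAt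
  -- φ strictly antitone on Ioi 0
  have c1 : (0:ℝ) < B * ρ * (2 - ρ) := by
    apply mul_pos (mul_pos hB hρ0); linarith
  have c2' : (0:ℝ) < C * σ * (2 - σ) := by
    apply mul_pos (mul_pos hC hσ0); linarith
  have hφanti : StrictAntiOn φ (Ioi (0:ℝ)) := by
    intro x hx y hy hxy
    have h1 : y ^ (ρ - τ) < x ^ (ρ - τ) := Real.rpow_lt_rpow_of_neg hx hxy (by linarith)
    have h2 : y ^ (σ - τ) < x ^ (σ - τ) := Real.rpow_lt_rpow_of_neg hx hxy (by linarith)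
    have i1 := mul_lt_mul_of_pos_left h1 c1
    have i2 := mul_lt_mul_of_pos_left h2 c2'
    simp only [hφdef]
    linarith
  -- find u with φ u > 0, v with φ v < 0
  have hφbig : Tendsto (fun t : ℝ => C * σ * (2 - σ) * t ^ (σ - τ) - D * τ * (τ - 2))
      (𝓝[>] (0:ℝ)) atTop := by
    apply tendsto_atTop_add_const_right
    exact (rpow_tendsto_atTop_zero (by linarith)).const_mul_atTop c2'
  have hφu : ∀ᶠ t in 𝓝[>] (0:ℝ), 0 < φ t := by
    filter_upwards [hφbig.eventually_gt_atTop 0, eventually_mem_nhdsWithin] with t h1 h2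
    have : 0 ≤ B * ρ * (2 - ρ) * t ^ (ρ - τ) :=
      le_of_lt (mul_pos c1 (Real.rpow_pos_of_pos h2 _))
    simp only [hφdef]
    linarith
  have hφv : ∀ᶠ t in atTop, φ t < 0 := by
    have t1 : Tendsto (fun t : ℝ => t ^ (ρ - τ)) atTop (𝓝 0) := by
      have := tendsto_rpow_neg_atTop (y := τ - ρ) (by linarith)
      simpa [neg_sub] using this
    have t2 : Tendsto (fun t : ℝ => t ^ (σ - τ)) atTop (𝓝 0) := by
      have := tendsto_rpow_neg_atTop (y := τ - σ) (by linarith)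
      simpa [neg_sub] using this
    have tφ : Tendsto φ atTop (𝓝 (B * ρ * (2-ρ) * 0 + C * σ * (2-σ) * 0 - D * τ * (τ - 2))) := by
      exact ((t1.const_mul _).add (t2.const_mul _)).sub_const _
    apply tφ.eventually_lt_const
    have : 0 < D * τ * (τ - 2) := by apply mul_pos (mul_pos hD hτ0); linarith
    linarith
  obtain ⟨u, hφupos, hu0⟩ := (hφu.and eventually_mem_nhdsWithin).exists
  obtain ⟨v, hφvneg, huv'⟩ := (hφv.and (eventually_gt_atTop u)).exists
  have hv0 : 0 < v := hu0.trans huv'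
  -- m : zero of φ
  have hφcont : ContinuousOn φ (Icc u v) := by
    intro x hx
    have hx0 : 0 < x := lt_of_lt_of_le hu0 hx.1
    have : ContinuousAt φ x := by
      apply ContinuousAt.sub
      apply ContinuousAt.add
      · exact (Real.continuousAt_rpow_const x _ (Or.inl hx0.ne')).const_mul _
      · exact (Real.continuousAt_rpow_const x _ (Or.inl hx0.ne')).const_mul _
      · exact continuousAt_const
    exact this.continuousWithinAt
  obtain ⟨m, hmuv, hφm⟩ : ∃ m ∈ Icc u v, φ m = 0 := by
    have := intermediate_value_Icc' (le_of_lt huv') hφcont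
    have h0mem : (0:ℝ) ∈ Icc (φ v) (φ u) := ⟨hφvneg.le, hφupos.le⟩
    obtain ⟨m, hm, hφm⟩ := this h0mem
    exact ⟨m, hm, hφm⟩
  have hm0 : 0 < m := lt_of_lt_of_le hu0 hmuv.1
  -- sign of φ around m
  have hφposlt : ∀ t : ℝ, 0 < t → t < m → 0 < φ t := fun t ht htm => by
    have := hφanti ht hm0 htm; rw [hφm] at this; exact this
  have hφneggt : ∀ t : ℝ, m < t → φ t < 0 := fun t hmt => by
    have := hφanti hm0 (hm0.trans hmt) hmt; rw [hφm] at this; exact this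
  -- g monotone structure
  have hgmono : StrictMonoOn g (Ioc 0 m) := by
    apply strictMonoOn_of_deriv_pos (convex_Ioc 0 m)
    · exact fun x hx => (hgcontAt x hx.1).continuousWithinAt
    · intro x hx
      rw [interior_Ioc] at hx
      rw [(hgd x hx.1).deriv]
      exact mul_pos (Real.rpow_pos_of_pos hx.1 _) (hφposlt x hx.1 hx.2)
  have hganti : StrictAntiOn g (Ici m) := by
    apply strictAntiOn_of_deriv_neg (convex_Ici m)
    · exact fun x hx => (hgcontAt x (hm0.trans_le hx)).continuousWithinAt
    · intro x hx
      rw [interior_Ici] at hx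
      rw [(hgd x (hm0.trans hx)).deriv]
      exact mul_neg_of_pos_of_neg (Real.rpow_pos_of_pos (hm0.trans hx) _) (hφneggt x hx)
  -- g m > 0
  obtain ⟨t', ht'0, ht'pos⟩ := hpos
  have hgm : 0 < g m := by
    by_contra hgm
    push_neg at hgm
    have hgle : ∀ c : ℝ, 0 < c → g c ≤ 0 := by
      intro c hc
      rcases le_or_gt c m with hcm | hmc
      · exact le_trans ((hgmono.monotoneOn) ⟨hc, hcm⟩ ⟨hm0, le_refl m⟩ hcm) hgm
      · exact le_trans ((hganti.antitoneOn) (self_mem_Ici) (le_of_lt hmc) hmc.le) hgm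
    have hhanti : AntitoneOn h (Ici (0:ℝ)) := by
      apply antitoneOn_of_deriv_nonpos (convex_Ici 0) hcont.continuousOn
      · intro x hx
        rw [interior_Ici] at hx
        exact (hd x hx).differentiableAt.differentiableWithinAt
      · intro x hx
        rw [interior_Ici] at hx
        rw [hderiv x hx]
        exact mul_nonpos_of_nonneg_of_nonpos hx.le (hgle x hx)
    have := hhanti self_mem_Ici (le_of_lt ht'0 : (0:ℝ) ≤ t') (le_of_lt ht'0)
    rw [h0] at this
    linarith
  -- find u' ∈ (0, m) with g u' < 0
  have hgnear0 : ∀ᶠ t in 𝓝[>] (0:ℝ), g t < 0 := by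
    have hbig : Tendsto (fun t : ℝ => C * σ * t ^ (σ - 2)) (𝓝[>] (0:ℝ)) atTop :=
      (rpow_tendsto_atTop_zero (by linarith)).const_mul_atTop (mul_pos hC hσ0)
    filter_upwards [hbig.eventually_gt_atTop 1, eventually_mem_nhdsWithin] with t h1 h2
    have n1 : 0 ≤ B * ρ * t ^ (ρ - 2) :=
      le_of_lt (mul_pos (mul_pos hB hρ0) (Real.rpow_pos_of_pos h2 _))
    have n2 : 0 ≤ D * τ * t ^ (τ - 2) :=
      le_of_lt (mul_pos (mul_pos hD hτ0) (Real.rpow_pos_of_pos h2 _))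
    simp only [hgdef]
    linarith
  obtain ⟨u', hu'g, hu'mem⟩ :=
    (hgnear0.and (eventually_mem_nhdsWithin.and
      (eventually_nhdsWithin_of_eventually_nhds (eventually_lt_nhds hm0)))).exists
  have hu'0 : 0 < u' := hu'mem.1
  have hu'm : u' < m := hu'mem.2
  -- find v' > m with g v' < 0
  have hgfar : ∀ᶠ t in atTop, g t < 0 := by
    have hbig : Tendsto (fun t : ℝ => D * τ * t ^ (τ - 2)) atTop atTop :=
      (tendsto_rpow_atTop (by linarith)).const_mul_atTop (mul_pos hD hτ0)
    filter_upwards [hbig.eventually_gt_atTop 1, eventually_gt_atTop 0] with t h1 h2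
    have n1 : 0 ≤ B * ρ * t ^ (ρ - 2) :=
      le_of_lt (mul_pos (mul_pos hB hρ0) (Real.rpow_pos_of_pos h2 _))
    have n2 : 0 ≤ C * σ * t ^ (σ - 2) :=
      le_of_lt (mul_pos (mul_pos hC hσ0) (Real.rpow_pos_of_pos h2 _))
    simp only [hgdef]
    linarith
  obtain ⟨v', hv'g, hmv'⟩ := (hgfar.and (eventually_gt_atTop m)).exists
  -- a : zero of g on (u', m)
  have hgcont1 : ContinuousOn g (Icc u' m) :=
    fun x hx => (hgcontAt x (hu'0.trans_le hx.1)).continuousWithinAt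
  obtain ⟨a, hauv, hga⟩ : ∃ a ∈ Icc u' m, g a = 0 := by
    have := intermediate_value_Icc (le_of_lt hu'm) hgcont1
    exact this ⟨hu'g.le, hgm.le⟩
  have ha0 : 0 < a := hu'0.trans_le hauv.1
  have ham : a < m := by
    rcases eq_or_lt_of_le hauv.2 with he | h'
    · rw [he] at hga; rw [hga] at hgm; exact absurd hgm (lt_irrefl 0)
    · exact h'
  -- b : zero of g on (m, v')
  have hgcont2 : ContinuousOn g (Icc m v') :=
    fun x hx => (hgcontAt x (hm0.trans_le hx.1)).continuousWithinAt
  obtain ⟨b, hbmv, hgb⟩ : ∃ b ∈ Icc m v', g b = 0 := by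
    have := intermediate_value_Icc' (le_of_lt hmv') hgcont2
    exact this ⟨hv'g.le, hgm.le⟩
  have hmb : m < b := by
    rcases eq_or_lt_of_le hbmv.1 with he | h'
    · rw [← he] at hgb; rw [hgb] at hgm; exact absurd hgm (lt_irrefl 0)
    · exact h'
  have hb0 : 0 < b := hm0.trans hmb
  have hab : a < b := ham.trans hmb
  -- sign of g
  have hgneg1 : ∀ t : ℝ, 0 < t → t < a → g t < 0 := by
    intro t ht hta
    have := hgmono ⟨ht, (hta.trans ham).le⟩ ⟨ha0, ham.le⟩ hta
    rwa [hga] at this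
  have hgpos : ∀ t : ℝ, a < t → t < b → 0 < g t := by
    intro t hat htb
    rcases le_or_gt t m with htm | hmt
    · have := hgmono ⟨ha0, ham.le⟩ ⟨ha0.trans hat, htm⟩ hat
      rwa [hga] at this
    · have := hganti hmt.le hmb.le htb
      rwa [hgb] at this
  have hgneg2 : ∀ t : ℝ, b < t → g t < 0 := by
    intro t hbt
    have := hganti hmb.le (hmb.trans hbt).le hbt
    rwa [hgb] at this
  -- monotonicity of h
  have hanti1 : StrictAntiOn h (Icc 0 a) := by
    apply strictAntiOn_of_deriv_neg (convex_Icc 0 a) hcont.continuousOn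
    intro x hx
    rw [interior_Icc] at hx
    rw [hderiv x hx.1]
    exact mul_neg_of_pos_of_neg hx.1 (hgneg1 x hx.1 hx.2)
  have hmono : StrictMonoOn h (Icc a b) := by
    apply strictMonoOn_of_deriv_pos (convex_Icc a b) hcont.continuousOn
    intro x hx
    rw [interior_Icc] at hx
    rw [hderiv x (ha0.trans hx.1)]
    exact mul_pos (ha0.trans hx.1) (hgpos x hx.1 hx.2)
  have hanti2 : StrictAntiOn h (Ici b) := by
    apply strictAntiOn_of_deriv_neg (convex_Ici b) hcont.continuousOn
    intro x hx
    rw [interior_Ici] at hx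
    rw [hderiv x (hb0.trans hx)]
    exact mul_neg_of_pos_of_neg (hb0.trans hx) (hgneg2 x hx)
  -- h < 0 on (0, a]
  have hhneg : ∀ t : ℝ, 0 < t → t ≤ a → h t < 0 := by
    intro t ht hta
    have := hanti1 ⟨le_refl 0, ha0.le⟩ ⟨ht.le, hta⟩ ht
    rwa [h0] at this
  -- h b > 0
  have hhb : 0 < h b := by
    rcases le_or_gt t' a with hta | hat
    · exact absurd (hhneg t' ht'0 hta) (by linarith)
    rcases le_or_gt t' b with htb | hbt
    · exact lt_of_lt_of_le ht'pos (hmono.monotoneOn ⟨hat.le, htb⟩ ⟨hab.le, le_refl b⟩ htb)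
    · exact lt_of_lt_of_le ht'pos (hanti2.antitoneOn self_mem_Ici hbt.le hbt.le)
  have hha : h a < 0 := hhneg a ha0 (le_refl a)
  -- R₀
  obtain ⟨R₀, hR₀mem, hhR₀⟩ : ∃ R₀ ∈ Icc a b, h R₀ = 0 :=
    intermediate_value_Icc hab.le hcont.continuousOn ⟨hha.le, hhb.le⟩
  have haR₀ : a < R₀ := by
    rcases eq_or_lt_of_le hR₀mem.1 with he | h'
    · rw [← he] at hhR₀; rw [hhR₀] at hha; exact absurd hha (lt_irrefl 0)
    · exact h'
  have hR₀b : R₀ < b := by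
    rcases eq_or_lt_of_le hR₀mem.2 with he | h'
    · rw [he] at hhR₀; rw [hhR₀] at hhb; exact absurd hhb (lt_irrefl 0)
    · exact h'
  have hR₀0 : 0 < R₀ := ha0.trans haR₀
  -- T with h T < 0 and T > b
  have hhfar : ∀ᶠ t in atTop, h t < 0 := by
    have hbig : Tendsto (fun t : ℝ => D * t ^ (τ - 2)) atTop atTop :=
      (tendsto_rpow_atTop (by linarith)).const_mul_atTop hD
    filter_upwards [hbig.eventually_gt_atTop 1, eventually_gt_atTop 0] with t h1 h2
    have n1 : 0 ≤ B * t ^ ρ := le_of_lt (mul_pos hB (Real.rpow_pos_of_pos h2 _))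
    have n2 : 0 ≤ C * t ^ σ := le_of_lt (mul_pos hC (Real.rpow_pos_of_pos h2 _))
    have hτsplit : t ^ τ = t ^ (2:ℝ) * t ^ (τ - 2) := by
      rw [← Real.rpow_add h2]; ring_nf
    have ht2 : 0 < t ^ (2:ℝ) := Real.rpow_pos_of_pos h2 _
    rw [hh]
    simp only
    rw [hτsplit, show D * (t ^ (2:ℝ) * t ^ (τ - 2)) = t ^ (2:ℝ) * (D * t ^ (τ - 2)) from by ring]
    have key := mul_lt_mul_of_pos_left h1 ht2
    rw [mul_one] at key
    linarith
  obtain ⟨T, hhT, hbT⟩ := (hhfar.and (eventually_gt_atTop b)).exists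
  -- R₁
  obtain ⟨R₁, hR₁mem, hhR₁⟩ : ∃ R₁ ∈ Icc b T, h R₁ = 0 :=
    intermediate_value_Icc' hbT.le hcont.continuousOn ⟨hhT.le, hhb.le⟩
  have hbR₁ : b < R₁ := by
    rcases eq_or_lt_of_le hR₁mem.1 with he | h'
    · rw [← he] at hhR₁; rw [hhR₁] at hhb; exact absurd hhb (lt_irrefl 0)
    · exact h'
  -- sign characterization
  have hsign : ∀ t : ℝ, 0 < t → (0 < h t ↔ R₀ < t ∧ t < R₁) := by
    intro t ht
    constructor
    · intro hht
      constructor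
      · by_contra hle
        push_neg at hle
        rcases le_or_gt t a with hta | hat
        · exact absurd (hhneg t ht hta) (by linarith)
        · rcases eq_or_lt_of_le hle with he | hlt
          · rw [he, hhR₀] at hht; exact lt_irrefl 0 hht
          · have := hmono ⟨hat.le, (hlt.trans hR₀b).le⟩ hR₀mem hlt
            rw [hhR₀] at this; linarith
      · by_contra hle
        push_neg at hle
        rcases eq_or_lt_of_le hle with he | hlt
        · rw [← he, hhR₁] at hht; exact lt_irrefl 0 hht
        · have := hanti2 hR₁mem.1 (hbR₁.trans hlt).le hlt
          rw [hhR₁] at this; linarith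
    · rintro ⟨h1, h2⟩
      rcases le_or_gt t b with htb | hbt
      · have := hmono ⟨hR₀mem.1, hR₀mem.2⟩ ⟨(haR₀.trans h1).le, htb⟩ h1
        rwa [hhR₀] at this
      · have := hanti2 hbt.le hR₁mem.1 h2
        rwa [hhR₁] at this
  refine ⟨R₀, R₁, hR₀0, hR₀b.trans hbR₁, hhR₀, hhR₁, hsign, a, b, ha0, haR₀, hR₀b, hbR₁,
    ?_, hha, ?_, hhb, ?_⟩
  · -- IsLocalMin h a
    have hmem : Ioo (0:ℝ) b ∈ 𝓝 a := isOpen_Ioo.mem_nhds ⟨ha0, hab⟩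
    refine Filter.eventually_of_mem hmem fun x hx => ?_
    rcases le_or_gt x a with hxa | hax
    · exact hanti1.antitoneOn ⟨hx.1.le, hxa⟩ ⟨ha0.le, le_refl a⟩ hxa
    · exact hmono.monotoneOn ⟨le_refl a, hab.le⟩ ⟨hax.le, hx.2.le⟩ hax.le
  · -- global max at b
    intro t ht
    rcases le_or_gt t a with hta | hat
    · exact le_of_lt ((hhneg t ht hta).trans hhb)
    rcases le_or_gt t b with htb | hbt
    · exact hmono.monotoneOn ⟨hat.le, htb⟩ ⟨hab.le, le_refl b⟩ htb
    · exact hanti2.antitoneOn self_mem_Ici hbt.le hbt.le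
  · -- critical points
    ext t
    simp only [mem_setOf_eq, mem_insert_iff, mem_singleton_iff]
    constructor
    · rintro ⟨ht, hdt⟩
      rw [hderiv t ht] at hdt
      have hgt : g t = 0 := by
        rcases mul_eq_zero.1 hdt with h' | h'
        · exact absurd h' ht.ne'
        · exact h'
      rcases lt_trichotomy t a with h' | h' | h'
      · exact absurd hgt (ne_of_lt (hgneg1 t ht h'))
      · exact Or.inl h'
      rcases lt_trichotomy t b with h'' | h'' | h''
      · exact absurd hgt (ne_of_gt (hgpos t h' h''))
      · exact Or.inr h''
      · exact absurd hgt (ne_of_lt (hgneg2 t h''))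
    · rintro (rfl | rfl)
      · exact ⟨ha0, by rw [hderiv t ha0, hga, mul_zero]⟩
      · exact ⟨hb0, by rw [hderiv t hb0, hgb, mul_zero]⟩
end

section
/- Let N ≥ 3 and p̄ = 2+4/N < p, q, r < 2*, with γ_s = N(s−2)/(2s). If (u,v) ∈ S_{a₁} × S_{a₂} satisfies both P(u,v) = 0 and the second-order condition 2(|∇u|₂²+|∇v|₂²) = pγ_p² μ₁|u|_p^p + qγ_q² μ₂|v|_q^q + (rγ_r)² β∫|u|^{r₁}|v|^{r₂} (i.e. Φ''_{(u,v)}(0) = 0), then (pγ_p−2)γ_p μ₁|u|_p^p + (qγ_q−2)γ_q μ₂|v|_q^q + (rγ_r−2)rγ_r β∫|u|^{r₁}|v|^{r₂} = 0, and hence, since pγ_p, qγ_q, rγ_r > 2 and μ₁, μ₂, β > 0, u = 0 and v = 0. In particular the degenerate part 𝒫⁰_{a₁,a₂} of the Pohozaev manifold is empty in the purely L²-supercritical regime. -/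
open MeasureTheory

set_option maxHeartbeats 1000000 in
theorem stmt_12 (N : ℕ) (hN : 3 ≤ N)
    (u v : EuclideanSpace ℝ (Fin N) → ℝ) (hu : Continuous u) (hv : Continuous v)
    (a₁ a₂ μ₁ μ₂ β p q r₁ r₂ r γp γq γr : ℝ)
    (ha₁ : 0 < a₁) (ha₂ : 0 < a₂) (hμ₁ : 0 < μ₁) (hμ₂ : 0 < μ₂) (hβ : 0 < β)
    (hpl : 2 + 4 / N < p) (hpu : p < 2 * N / ((N : ℝ) - 2))
    (hql : 2 + 4 / N < q) (hqu : q < 2 * N / ((N : ℝ) - 2))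
    (hr : r = r₁ + r₂) (hr1 : 1 < r₁) (hr2 : 1 < r₂)
    (hrl : 2 + 4 / N < r) (hru : r < 2 * N / ((N : ℝ) - 2))
    (hγp : γp = (N : ℝ) * (p - 2) / (2 * p))
    (hγq : γq = (N : ℝ) * (q - 2) / (2 * q))
    (hγr : γr = (N : ℝ) * (r - 2) / (2 * r))
    (hintp : Integrable (fun x => |u x| ^ p))
    (hintq : Integrable (fun x => |v x| ^ q))
    (hintr : Integrable (fun x => |u x| ^ r₁ * |v x| ^ r₂))
    (hint2u : Integrable (fun x => (u x) ^ 2))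
    (hint2v : Integrable (fun x => (v x) ^ 2))
    (hu2 : (∫ x, (u x) ^ 2) = a₁ ^ 2) (hv2 : (∫ x, (v x) ^ 2) = a₂ ^ 2)
    (hP : (∫ x, ‖fderiv ℝ u x‖ ^ 2) + (∫ x, ‖fderiv ℝ v x‖ ^ 2) =
      γp * μ₁ * (∫ x, |u x| ^ p) + γq * μ₂ * (∫ x, |v x| ^ q)
        + r * γr * β * (∫ x, |u x| ^ r₁ * |v x| ^ r₂))
    (hsec : 2 * ((∫ x, ‖fderiv ℝ u x‖ ^ 2) + ∫ x, ‖fderiv ℝ v x‖ ^ 2) =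
      p * γp ^ 2 * μ₁ * (∫ x, |u x| ^ p) + q * γq ^ 2 * μ₂ * (∫ x, |v x| ^ q)
        + (r * γr) ^ 2 * β * (∫ x, |u x| ^ r₁ * |v x| ^ r₂)) :
    ((p * γp - 2) * γp * μ₁ * (∫ x, |u x| ^ p)
      + (q * γq - 2) * γq * μ₂ * (∫ x, |v x| ^ q)
      + (r * γr - 2) * r * γr * β * (∫ x, |u x| ^ r₁ * |v x| ^ r₂) = 0) ∧
    (∫ x, |u x| ^ p) = 0 ∧ (∫ x, |v x| ^ q) = 0 ∧ False := by
  have hN0 : (0:ℝ) < N := by positivity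
  have h4N : (0:ℝ) < 4 / N := by positivity
  have hp2 : (2:ℝ) < p := by linarith
  have hq2 : (2:ℝ) < q := by linarith
  have hr2' : (2:ℝ) < r := by linarith
  have hp0 : (0:ℝ) < p := by linarith
  have hq0 : (0:ℝ) < q := by linarith
  have hr0 : (0:ℝ) < r := by linarith
  have hγp0 : 0 < γp := by rw [hγp]; exact div_pos (mul_pos hN0 (by linarith)) (by linarith)
  have hγq0 : 0 < γq := by rw [hγq]; exact div_pos (mul_pos hN0 (by linarith)) (by linarith)
  have hγr0 : 0 < γr := by rw [hγr]; exact div_pos (mul_pos hN0 (by linarith)) (by linarith)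
  have hpγ : p * γp = (N:ℝ) * (p - 2) / 2 := by rw [hγp]; field_simp
  have hqγ : q * γq = (N:ℝ) * (q - 2) / 2 := by rw [hγq]; field_simp
  have hrγ : r * γr = (N:ℝ) * (r - 2) / 2 := by rw [hγr]; field_simp
  have hdiv : (4:ℝ) / N * N = 4 := div_mul_cancel₀ 4 (ne_of_gt hN0)
  have hexp : (2 + 4/(N:ℝ)) * N = 2*N + 4 := by field_simp
  have hpN : 2*(N:ℝ) + 4 < p * N := by rw [← hexp]; exact mul_lt_mul_of_pos_right hpl hN0
  have hqN : 2*(N:ℝ) + 4 < q * N := by rw [← hexp]; exact mul_lt_mul_of_pos_right hql hN0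
  have hrN : 2*(N:ℝ) + 4 < r * N := by rw [← hexp]; exact mul_lt_mul_of_pos_right hrl hN0
  have hpγ2 : 2 < p * γp := by rw [hpγ]; linarith
  have hqγ2 : 2 < q * γq := by rw [hqγ]; linarith
  have hrγ2 : 2 < r * γr := by rw [hrγ]; linarith
  set A := ∫ x, |u x| ^ p with hAdef
  set B := ∫ x, |v x| ^ q with hBdef
  set C := ∫ x, |u x| ^ r₁ * |v x| ^ r₂ with hCdef
  have hA0 : 0 ≤ A := integral_nonneg fun x => Real.rpow_nonneg (abs_nonneg _) _
  have hB0 : 0 ≤ B := integral_nonneg fun x => Real.rpow_nonneg (abs_nonneg _) _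
  have hC0 : 0 ≤ C := integral_nonneg fun x =>
    mul_nonneg (Real.rpow_nonneg (abs_nonneg _) _) (Real.rpow_nonneg (abs_nonneg _) _)
  have hkey : (p * γp - 2) * γp * μ₁ * A + (q * γq - 2) * γq * μ₂ * B
      + (r * γr - 2) * r * γr * β * C = 0 := by
    linear_combination 2 * hP - hsec
  have hc1 : 0 < (p * γp - 2) * γp * μ₁ := mul_pos (mul_pos (by linarith) hγp0) hμ₁
  have hc2 : 0 < (q * γq - 2) * γq * μ₂ := mul_pos (mul_pos (by linarith) hγq0) hμ₂
  have hc3 : 0 < (r * γr - 2) * r * γr * β := mul_pos (mul_pos (mul_pos (by linarith) hr0) hγr0) hβ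
  have ht1 : 0 ≤ (p * γp - 2) * γp * μ₁ * A := mul_nonneg hc1.le hA0
  have ht2 : 0 ≤ (q * γq - 2) * γq * μ₂ * B := mul_nonneg hc2.le hB0
  have ht3 : 0 ≤ (r * γr - 2) * r * γr * β * C := mul_nonneg hc3.le hC0
  have h1 : (p * γp - 2) * γp * μ₁ * A = 0 := by linarith
  have hA : A = 0 := (mul_eq_zero.mp h1).resolve_left hc1.ne'
  -- A = 0 forces u ≡ 0, contradicting ∫ u² = a₁² > 0
  have hae : (fun x => |u x| ^ p) =ᵐ[volume] 0 := by
    have := (integral_eq_zero_iff_of_nonneg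
      (fun x => Real.rpow_nonneg (abs_nonneg (u x)) p) hintp).mp hA
    exact this
  have huae : u =ᵐ[volume] 0 := by
    filter_upwards [hae] with x hx
    have hx' : |u x| ^ p = 0 := hx
    have : |u x| = 0 := by
      by_contra h
      have habs : 0 < |u x| := lt_of_le_of_ne (abs_nonneg _) (Ne.symm h)
      exact absurd hx' (ne_of_gt (Real.rpow_pos_of_pos habs p))
    simpa [abs_eq_zero] using this
  have huzero : u = 0 := (Continuous.ae_eq_iff_eq volume hu continuous_const).mp huae
  have : (∫ x, (u x) ^ 2) = 0 := by simp [huzero]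
  have hfalse : False := by
    rw [hu2] at this
    exact (pow_pos ha₁ 2).ne' this
  exact hfalse.elim
end
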